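/- Let c, λ, β, μ > 0, let R₁ > 0 and R₂ < 0 be the two real roots of cξ² + (βc − λ − μ)ξ − βμ = 0, and let γ ∈ ℝ. Define F₁(x) = γ[(R₁ + β)e^{R₁x} − (R₂ + β)e^{R₂x}]. Then for every x ≥ 0, −(μ + λ)F₁(x) + cF₁'(x) + λ∫₀ˣ F₁(x − y)·βe^{−βy} dy = 0. -/

import Mathlib

open MeasureTheory intervalIntegral Real

/-- With `R₁ > 0`, `R₂ < 0` the two real roots of `cξ² + (βc − λ − μ)ξ − βμ = 0`,
the function `F₁(x) = γ[(R₁+β)e^{R₁x} − (R₂+β)e^{R₂x}]` satisfies the HJB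
equation of the no-dividend region:
`−(μ+λ)F₁(x) + cF₁'(x) + λ∫₀ˣ F₁(x−y)·βe^{−βy} dy = 0` for every `x ≥ 0`. -/
theorem F1_solves_no_dividend_HJB
    (c lam beta mu gamma R₁ R₂ : ℝ)
    (hc : 0 < c) (hlam : 0 < lam) (hbeta : 0 < beta) (hmu : 0 < mu)
    (hR₁pos : 0 < R₁) (hR₂neg : R₂ < 0)
    (hR₁ : c * R₁ ^ 2 + (beta * c - lam - mu) * R₁ - beta * mu = 0)
    (hR₂ : c * R₂ ^ 2 + (beta * c - lam - mu) * R₂ - beta * mu = 0) :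
    ∀ x : ℝ, 0 ≤ x →
      -(mu + lam) * (gamma * ((R₁ + beta) * Real.exp (R₁ * x)
          - (R₂ + beta) * Real.exp (R₂ * x)))
      + c * deriv (fun x : ℝ => gamma * ((R₁ + beta) * Real.exp (R₁ * x)
          - (R₂ + beta) * Real.exp (R₂ * x))) x
      + lam * ∫ y in (0:ℝ)..x,
          (gamma * ((R₁ + beta) * Real.exp (R₁ * (x - y))
            - (R₂ + beta) * Real.exp (R₂ * (x - y)))) * (beta * Real.exp (-beta * y))
      = 0 := by
  intro x hx
  -- derivative computation
  have hexp : ∀ (R t : ℝ), HasDerivAt (fun s : ℝ => Real.exp (R * s))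
      (R * Real.exp (R * t)) t := by
    intro R t
    have := ((hasDerivAt_id t).const_mul R).exp
    simpa [mul_comm] using this
  have hderiv : deriv (fun x : ℝ => gamma * ((R₁ + beta) * Real.exp (R₁ * x)
      - (R₂ + beta) * Real.exp (R₂ * x))) x
      = gamma * ((R₁ + beta) * (R₁ * Real.exp (R₁ * x))
          - (R₂ + beta) * (R₂ * Real.exp (R₂ * x))) := by
    have h : HasDerivAt (fun x : ℝ => gamma * ((R₁ + beta) * Real.exp (R₁ * x)
        - (R₂ + beta) * Real.exp (R₂ * x)))
        (gamma * ((R₁ + beta) * (R₁ * Real.exp (R₁ * x))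
          - (R₂ + beta) * (R₂ * Real.exp (R₂ * x)))) x :=
      (((hexp R₁ x).const_mul (R₁ + beta)).sub
        ((hexp R₂ x).const_mul (R₂ + beta))).const_mul gamma
    exact h.deriv
  -- integral computation via FTC
  have hint : (∫ y in (0:ℝ)..x,
        (gamma * ((R₁ + beta) * Real.exp (R₁ * (x - y))
          - (R₂ + beta) * Real.exp (R₂ * (x - y)))) * (beta * Real.exp (-beta * y)))
      = gamma * beta * (Real.exp (R₁ * x) - Real.exp (R₂ * x)) := by
    have hG : ∀ y ∈ Set.uIcc (0:ℝ) x,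
        HasDerivAt (fun y : ℝ => -(gamma * beta) *
            (Real.exp (R₁ * x) * Real.exp (-(R₁ + beta) * y)
              - Real.exp (R₂ * x) * Real.exp (-(R₂ + beta) * y)))
          ((gamma * ((R₁ + beta) * Real.exp (R₁ * (x - y))
            - (R₂ + beta) * Real.exp (R₂ * (x - y)))) * (beta * Real.exp (-beta * y))) y := by
      intro y _
      have h1 := (hexp (-(R₁ + beta)) y).const_mul (Real.exp (R₁ * x))
      have h2 := (hexp (-(R₂ + beta)) y).const_mul (Real.exp (R₂ * x))
      have h := (h1.sub h2).const_mul (-(gamma * beta))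
      refine h.congr_deriv (Eq.symm ?_)
      have k1 : Real.exp (R₁ * (x - y)) * Real.exp (-beta * y)
          = Real.exp (R₁ * x) * Real.exp (-(R₁ + beta) * y) := by
        rw [← Real.exp_add, ← Real.exp_add]; congr 1; ring
      have k2 : Real.exp (R₂ * (x - y)) * Real.exp (-beta * y)
          = Real.exp (R₂ * x) * Real.exp (-(R₂ + beta) * y) := by
        rw [← Real.exp_add, ← Real.exp_add]; congr 1; ring
      linear_combination (gamma * beta * (R₁ + beta)) * k1
        - (gamma * beta * (R₂ + beta)) * k2
    have hcont : IntervalIntegrable (fun y : ℝ =>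
        (gamma * ((R₁ + beta) * Real.exp (R₁ * (x - y))
          - (R₂ + beta) * Real.exp (R₂ * (x - y)))) * (beta * Real.exp (-beta * y)))
        volume 0 x := by
      apply Continuous.intervalIntegrable
      fun_prop
    have := intervalIntegral.integral_eq_sub_of_hasDerivAt hG hcont
    rw [this]
    have e1 : Real.exp (R₁ * x) * Real.exp (-(R₁ + beta) * x) = Real.exp (-beta * x) := by
      rw [← Real.exp_add]; ring_nf
    have e2 : Real.exp (R₂ * x) * Real.exp (-(R₂ + beta) * x) = Real.exp (-beta * x) := by
      rw [← Real.exp_add]; ring_nf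
    simp only [mul_zero, neg_zero, Real.exp_zero, mul_one]
    rw [e1, e2]
    ring
  rw [hderiv, hint]
  linear_combination (gamma * Real.exp (R₁ * x)) * hR₁ - (gamma * Real.exp (R₂ * x)) * hR₂
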